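/- Let (P_n) be orthonormal polynomials satisfying x P_n(x) = b_n P_{n+1}(x) + b_{n−1} P_{n−1}(x) with b₀ = 1 and b_n > 0, and set u_n = |P_n(i)|. Then for every z ∈ ℂ with |z| ≤ 1 and every n ≥ 0, |P_n(z)| ≤ u_n. -/

import Mathlib

open MeasureTheory Polynomial

noncomputable def vSeq (b : ℕ → ℝ) : ℕ → ℝ
  | 0 => 1
  | 1 => 1
  | (n+2) => (vSeq b (n+1) + b n * vSeq b n) / b (n+1)

lemma vSeq_zero (b : ℕ → ℝ) : vSeq b 0 = 1 := by simp [vSeq]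
lemma vSeq_one (b : ℕ → ℝ) : vSeq b 1 = 1 := by simp [vSeq]
lemma vSeq_succ_succ (b : ℕ → ℝ) (n : ℕ) :
    vSeq b (n+2) = (vSeq b (n+1) + b n * vSeq b n) / b (n+1) := by rw [vSeq]

lemma vSeq_pos (b : ℕ → ℝ) (hb : ∀ n, 0 < b n) : ∀ n, 0 < vSeq b n := by
  have key : ∀ n, 0 < vSeq b n ∧ 0 < vSeq b (n+1) := by
    intro n
    induction n with
    | zero => exact ⟨by rw [vSeq_zero]; norm_num, by rw [vSeq_one]; norm_num⟩
    | succ k ih =>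
      refine ⟨ih.2, ?_⟩
      rw [vSeq_succ_succ]
      exact div_pos (add_pos ih.2 (mul_pos (hb k) ih.1)) (hb (k+1))
  exact fun n => (key n).1

/-- For `|z| ≤ 1` one has `|P_n(z)| ≤ u_n = |P_n(i)|` for the orthonormal polynomials
of a symmetric probability measure with `b₀ = 1`. -/
theorem abs_orthonormal_le_abs_at_i
    (μ : Measure ℝ) [IsProbabilityMeasure μ]
    (hsym : Measure.map (fun x : ℝ => -x) μ = μ)
    (hmom : ∀ n : ℕ, Integrable (fun x => x ^ n) μ)
    (hsupp : ∀ p : Polynomial ℝ, p ≠ 0 → 0 < ∫ x, (p.eval x) ^ 2 ∂μ)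
    (P : ℕ → Polynomial ℝ)
    (hdeg : ∀ n, (P n).natDegree = n)
    (hlead : ∀ n, 0 < (P n).leadingCoeff)
    (horth : ∀ n m, ∫ x, (P n).eval x * (P m).eval x ∂μ = if n = m then 1 else 0)
    (b : ℕ → ℝ) (hbpos : ∀ n, 0 < b n) (hb0 : b 0 = 1)
    (hrec0 : (X : Polynomial ℝ) * P 0 = C (b 0) * P 1)
    (hrec : ∀ n, 1 ≤ n →
      (X : Polynomial ℝ) * P n = C (b n) * P (n + 1) + C (b (n - 1)) * P (n - 1))
    (u : ℕ → ℝ) (hu : ∀ n, u n = ‖Polynomial.aeval Complex.I (P n)‖) :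
    ∀ (n : ℕ) (z : ℂ), ‖z‖ ≤ 1 →
      ‖Polynomial.aeval z (P n)‖ ≤ u n := by
  -- P 0 = 1
  have hP0 : P 0 = 1 := by
    obtain ⟨a, ha⟩ := Polynomial.natDegree_eq_zero.mp (hdeg 0)
    have hapos : 0 < a := by
      have := hlead 0
      rw [← ha, Polynomial.leadingCoeff_C] at this
      exact this
    have h00 := horth 0 0
    rw [if_pos rfl, ← ha] at h00
    simp only [Polynomial.eval_C] at h00
    rw [integral_const] at h00
    simp at h00
    have : a = 1 := by nlinarith
    rw [← ha, this, Polynomial.C_1]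
  -- P 1 = X
  have hP1 : P 1 = X := by
    have := hrec0
    rw [hP0, hb0, Polynomial.C_1, one_mul, mul_one] at this
    exact this.symm
  -- recurrence for aeval
  have hrecz : ∀ (z : ℂ) (n : ℕ),
      Polynomial.aeval z (P (n+2)) =
        (z * Polynomial.aeval z (P (n+1)) - (b n : ℂ) * Polynomial.aeval z (P n)) / (b (n+1) : ℂ) := by
    intro z n
    have h := hrec (n+1) (by omega)
    simp only [Nat.add_sub_cancel] at h
    have h2 := congrArg (Polynomial.aeval z) h
    simp only [map_mul, map_add, Polynomial.aeval_X, Polynomial.aeval_C,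
      Complex.coe_algebraMap] at h2
    have hbne : (b (n+1) : ℂ) ≠ 0 := by
      exact_mod_cast (hbpos (n+1)).ne'
    field_simp
    linear_combination -h2
  -- value at i
  have hAi : ∀ n, Polynomial.aeval Complex.I (P n) = Complex.I ^ n * (vSeq b n : ℂ) := by
    have key : ∀ n, Polynomial.aeval Complex.I (P n) = Complex.I ^ n * (vSeq b n : ℂ) ∧
        Polynomial.aeval Complex.I (P (n+1)) = Complex.I ^ (n+1) * (vSeq b (n+1) : ℂ) := by
      intro n
      induction n with
      | zero =>
        constructor
        · rw [hP0, vSeq_zero]; simp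
        · rw [hP1, vSeq_one]; simp
      | succ k ih =>
        refine ⟨ih.2, ?_⟩
        rw [hrecz Complex.I k, ih.1, ih.2, vSeq_succ_succ]
        have hbne : (b (k+1) : ℂ) ≠ 0 := by exact_mod_cast (hbpos (k+1)).ne'
        have hI : Complex.I ^ (k+2) = - Complex.I ^ k := by
          rw [pow_add, Complex.I_sq]; ring
        rw [hI]
        push_cast
        have hI' : Complex.I * Complex.I ^ (k+1) = -Complex.I ^ k := by rw [← pow_succ', hI]
        calc _ = (Complex.I * Complex.I ^ (k+1) * ↑(vSeq b (k+1)) - ↑(b k) * (Complex.I ^ k * ↑(vSeq b k))) / ↑(b (k+1)) := by ring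
          _ = _ := by rw [hI']; field_simp; ring
    exact fun n => (key n).1
  have huv : ∀ n, u n = vSeq b n := by
    intro n
    rw [hu, hAi]
    rw [norm_mul, norm_pow, Complex.norm_I, one_pow, one_mul, Complex.norm_real,
      Real.norm_of_nonneg (vSeq_pos b hbpos n).le]
  -- main bound
  intro n z hz
  rw [huv]
  have key : ∀ m, ‖Polynomial.aeval z (P m)‖ ≤ vSeq b m ∧
      ‖Polynomial.aeval z (P (m+1))‖ ≤ vSeq b (m+1) := by
    intro m
    induction m with
    | zero =>
      constructor
      · rw [hP0, vSeq_zero]; simp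
      · rw [hP1, vSeq_one]; simpa using hz
    | succ k ih =>
      refine ⟨ih.2, ?_⟩
      rw [hrecz z k, vSeq_succ_succ, norm_div, Complex.norm_real,
        Real.norm_of_nonneg (hbpos (k+1)).le]
      have h1 : ‖z * Polynomial.aeval z (P (k+1)) - (b k:ℂ) * Polynomial.aeval z (P k)‖
          ≤ vSeq b (k+1) + b k * vSeq b k := by
        calc _ ≤ ‖z * Polynomial.aeval z (P (k+1))‖
                  + ‖(b k:ℂ) * Polynomial.aeval z (P k)‖ :=
              norm_sub_le _ _
          _ = ‖z‖ * ‖Polynomial.aeval z (P (k+1))‖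
                + b k * ‖Polynomial.aeval z (P k)‖ := by
              rw [norm_mul, norm_mul, Complex.norm_real, Real.norm_of_nonneg (hbpos k).le]
          _ ≤ 1 * vSeq b (k+1) + b k * vSeq b k := by
              gcongr <;>
                first
                  | exact ih.1
                  | exact ih.2
                  | exact hz
                  | exact (hbpos k).le
                  | positivity
                  | exact (norm_nonneg _).trans ih.2
          _ = vSeq b (k+1) + b k * vSeq b k := by ring
      exact (div_le_div_iff_of_pos_right (hbpos (k+1))).mpr h1
  exact (key n).1
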